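/- Let v ≥ 1 be a real number and define g_v(ρ) = vρ/(1−ρ^v) − ρ/(1−ρ) for ρ ∈ [0,1), where ρ^v = exp(v·log ρ) for ρ > 0 and 0^v = 0. Then g_v is concave on [0,1). -/

import Mathlib

open Real Set

lemma key1 {w : ℝ} (hw : 0 ≤ w) : 2 * (exp w - 1) ≤ w * (exp w + 1) := by
  have hder : ∀ y : ℝ, HasDerivAt (fun z => z * (exp z + 1) - 2 * (exp z - 1))
      ((exp y + 1) + y * exp y - 2 * exp y) y := by
    intro y
    have h := ((hasDerivAt_id y).mul ((Real.hasDerivAt_exp y).add_const 1)).sub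
      (((Real.hasDerivAt_exp y).sub_const 1).const_mul 2)
    refine h.congr_deriv ?_; simp only [id_eq, Pi.add_apply, Pi.mul_apply, Pi.sub_apply]; ring
  have hmono : MonotoneOn (fun z => z * (exp z + 1) - 2 * (exp z - 1)) (Ici (0:ℝ)) := by
    apply monotoneOn_of_deriv_nonneg (convex_Ici 0)
    · exact Continuous.continuousOn (by continuity)
    · intro y _; exact (hder y).differentiableAt.differentiableWithinAt
    · intro y hy
      rw [interior_Ici] at hy
      rw [(hder y).deriv]
      have h1 : (1 - y) * exp y ≤ 1 := by
        have h := Real.add_one_le_exp (-y)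
        rw [Real.exp_neg] at h
        have h2 : (1 - y) ≤ (exp y)⁻¹ := by linarith
        calc (1 - y) * exp y ≤ (exp y)⁻¹ * exp y :=
              mul_le_mul_of_nonneg_right h2 (Real.exp_pos y).le
          _ = 1 := inv_mul_cancel₀ (Real.exp_ne_zero y)
      nlinarith [Real.exp_pos y]
  have h0 := hmono (self_mem_Ici) hw hw
  simp at h0
  linarith

lemma key2 {w : ℝ} (hw : 0 ≤ w) : 3 * (exp w ^ 2 - 1) ≤ w * (exp w ^ 2 + 4 * exp w + 1) := by
  have hder1 : ∀ y : ℝ, HasDerivAt (fun z => z * (exp z ^ 2 + 4 * exp z + 1) - 3 * (exp z ^ 2 - 1))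
      ((exp y ^ 2 + 4 * exp y + 1) + y * (2 * exp y ^ 2 + 4 * exp y) - 6 * exp y ^ 2) y := by
    intro y
    have hsq : HasDerivAt (fun z => exp z ^ 2) (2 * exp y ^ 1 * exp y) y :=
      (Real.hasDerivAt_exp y).pow 2
    have h := ((hasDerivAt_id y).mul ((hsq.add ((Real.hasDerivAt_exp y).const_mul 4)).add_const 1)).sub
      ((hsq.sub_const 1).const_mul 3)
    refine h.congr_deriv ?_; simp only [id_eq, Pi.add_apply, Pi.mul_apply, Pi.sub_apply]; ring
  have hder2 : ∀ y : ℝ, HasDerivAt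
      (fun z => (exp z ^ 2 + 4 * exp z + 1) + z * (2 * exp z ^ 2 + 4 * exp z) - 6 * exp z ^ 2)
      ((2 * exp y ^ 2 + 4 * exp y) + ((2 * exp y ^ 2 + 4 * exp y)
        + y * (4 * exp y ^ 2 + 4 * exp y)) - 12 * exp y ^ 2) y := by
    intro y
    have hsq : HasDerivAt (fun z => exp z ^ 2) (2 * exp y ^ 1 * exp y) y :=
      (Real.hasDerivAt_exp y).pow 2
    have h := (((hsq.add ((Real.hasDerivAt_exp y).const_mul 4)).add_const 1).add
      ((hasDerivAt_id y).mul ((hsq.const_mul 2).add ((Real.hasDerivAt_exp y).const_mul 4)))).sub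
      (hsq.const_mul 6)
    refine h.congr_deriv ?_; simp only [id_eq, Pi.add_apply, Pi.mul_apply, Pi.sub_apply]; ring
  have hmono1 : MonotoneOn
      (fun z => (exp z ^ 2 + 4 * exp z + 1) + z * (2 * exp z ^ 2 + 4 * exp z) - 6 * exp z ^ 2)
      (Ici (0:ℝ)) := by
    apply monotoneOn_of_deriv_nonneg (convex_Ici 0)
    · exact Continuous.continuousOn (by continuity)
    · intro y _; exact (hder2 y).differentiableAt.differentiableWithinAt
    · intro y hy
      rw [interior_Ici] at hy
      rw [(hder2 y).deriv]
      have h := key1 hy.le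
      nlinarith [Real.exp_pos y]
  have hf'0 : ∀ y : ℝ, 0 ≤ y →
      0 ≤ (exp y ^ 2 + 4 * exp y + 1) + y * (2 * exp y ^ 2 + 4 * exp y) - 6 * exp y ^ 2 := by
    intro y hy
    have h0 := hmono1 (self_mem_Ici) hy hy
    simp at h0
    nlinarith
  have hmono2 : MonotoneOn (fun z => z * (exp z ^ 2 + 4 * exp z + 1) - 3 * (exp z ^ 2 - 1))
      (Ici (0:ℝ)) := by
    apply monotoneOn_of_deriv_nonneg (convex_Ici 0)
    · exact Continuous.continuousOn (by continuity)
    · intro y _; exact (hder1 y).differentiableAt.differentiableWithinAt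
    · intro y hy
      rw [interior_Ici] at hy
      rw [(hder1 y).deriv]
      exact hf'0 y hy.le
  have h0 := hmono2 (self_mem_Ici) hw hw
  simp at h0
  linarith


lemma key1' {T w : ℝ} (hT0 : 0 < T) (hE : exp w = T⁻¹) (hw : 0 ≤ w) :
    2 * (1 - T) ≤ w * (1 + T) := by
  have h := key1 hw
  rw [hE] at h
  have hT : T ≠ 0 := ne_of_gt hT0
  calc 2 * (1 - T) = 2 * (T⁻¹ - 1) * T := by field_simp
    _ ≤ w * (T⁻¹ + 1) * T := by
        apply mul_le_mul_of_nonneg_right _ hT0.le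
        linarith
    _ = w * (1 + T) := by field_simp

lemma key2' {T w : ℝ} (hT0 : 0 < T) (hE : exp w = T⁻¹) (hw : 0 ≤ w) :
    3 * (1 - T ^ 2) ≤ w * (1 + 4 * T + T ^ 2) := by
  have h := key2 hw
  rw [hE] at h
  have hT : T ≠ 0 := ne_of_gt hT0
  calc 3 * (1 - T ^ 2) = 3 * ((T⁻¹) ^ 2 - 1) * T ^ 2 := by field_simp
    _ ≤ w * ((T⁻¹) ^ 2 + 4 * T⁻¹ + 1) * T ^ 2 := by
        apply mul_le_mul_of_nonneg_right _ (sq_nonneg T)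
        linarith
    _ = w * (1 + 4 * T + T ^ 2) := by field_simp


lemma phi_le {x : ℝ} (hx0 : 0 < x) (hx1 : x < 1) {v : ℝ} (hv : 1 ≤ v) :
    v ^ 2 * x ^ (v - 1) * (1 + v + (v - 1) * x ^ v) / (1 - x ^ v) ^ 3 ≤ 2 / (1 - x) ^ 3 := by
  set L := Real.log x with hLdef
  have hL : L < 0 := Real.log_neg hx0 hx1
  set Φ : ℝ → ℝ := fun s => s ^ 2 * x ^ (s - 1) * (1 + s + (s - 1) * x ^ s) / (1 - x ^ s) ^ 3
    with hPhi
  have hTpos : ∀ s : ℝ, 0 < x ^ s := fun s => Real.rpow_pos_of_pos hx0 s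
  have hT1 : ∀ s : ℝ, 0 < s → x ^ s < 1 := fun s hs => Real.rpow_lt_one hx0.le hx1 hs
  have hxsmul : ∀ s : ℝ, x ^ (s - 1) * x = x ^ s := by
    intro s
    rw [← Real.rpow_add_one hx0.ne' (s - 1), sub_add_cancel]
  have hasDeriv : ∀ s : ℝ, 0 < s → HasDerivAt Φ
      ((((2 * s * x ^ (s - 1) + s ^ 2 * (x ^ (s - 1) * L)) * (1 + s + (s - 1) * x ^ s)
          + s ^ 2 * x ^ (s - 1) * (1 + (x ^ s + (s - 1) * (x ^ s * L)))) * (1 - x ^ s) ^ 3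
        - s ^ 2 * x ^ (s - 1) * (1 + s + (s - 1) * x ^ s) * (3 * (1 - x ^ s) ^ 2 * (-(x ^ s * L))))
        / ((1 - x ^ s) ^ 3) ^ 2) s := by
    intro s hs
    have hxs : HasDerivAt (fun s : ℝ => x ^ s) (x ^ s * L) s :=
      (Real.hasStrictDerivAt_const_rpow hx0 s).hasDerivAt
    have hxs1 : HasDerivAt (fun s : ℝ => x ^ (s - 1)) (x ^ (s - 1) * L) s := by
      have h0 := (Real.hasStrictDerivAt_const_rpow hx0 (s - 1)).hasDerivAt
      have h := HasDerivAt.comp s h0 ((hasDerivAt_id s).sub_const 1)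
      simpa [Function.comp_def, hLdef] using h
    have hN : HasDerivAt (fun s : ℝ => s ^ 2 * x ^ (s - 1) * (1 + s + (s - 1) * x ^ s))
        ((2 * s * x ^ (s - 1) + s ^ 2 * (x ^ (s - 1) * L)) * (1 + s + (s - 1) * x ^ s)
          + s ^ 2 * x ^ (s - 1) * (1 + (x ^ s + (s - 1) * (x ^ s * L)))) s := by
      have h := ((hasDerivAt_pow 2 s).mul hxs1).mul
        ((((hasDerivAt_id s).const_add 1)).add (((hasDerivAt_id s).sub_const 1).mul hxs))
      refine h.congr_deriv ?_
      simp only [id_eq, Pi.add_apply, Pi.mul_apply, Pi.sub_apply]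
      push_cast
      ring
    have hD : HasDerivAt (fun s : ℝ => (1 - x ^ s) ^ 3) (3 * (1 - x ^ s) ^ 2 * (-(x ^ s * L))) s := by
      have h := (hxs.const_sub 1).pow 3
      refine h.congr_deriv ?_
      norm_num
    have hD0 : (1 - x ^ s) ^ 3 ≠ 0 := by
      have h' : 0 < 1 - x ^ s := by linarith [hT1 s hs]
      positivity
    exact hN.div hD hD0
  have hderiv_nonpos : ∀ s : ℝ, 1 < s →
      ((((2 * s * x ^ (s - 1) + s ^ 2 * (x ^ (s - 1) * L)) * (1 + s + (s - 1) * x ^ s)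
          + s ^ 2 * x ^ (s - 1) * (1 + (x ^ s + (s - 1) * (x ^ s * L)))) * (1 - x ^ s) ^ 3
        - s ^ 2 * x ^ (s - 1) * (1 + s + (s - 1) * x ^ s) * (3 * (1 - x ^ s) ^ 2 * (-(x ^ s * L))))
        / ((1 - x ^ s) ^ 3) ^ 2) ≤ 0 := by
    intro s hs
    have hs0 : (0:ℝ) < s := by linarith
    have hT0 := hTpos s
    have hT1' := hT1 s hs0
    have hw : 0 ≤ -(s * L) := by nlinarith
    have hE : exp (-(s * L)) = (x ^ s)⁻¹ := by
      have h1 : -(s * L) = -(L * s) := by ring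
      rw [h1, Real.exp_neg, hLdef, ← Real.rpow_def_of_pos hx0]
    have h1 := key1' hT0 hE hw
    have h2 := key2' hT0 hE hw
    have e1 : 3 * (1 - (x ^ s) ^ 2) + s * L * (1 + 4 * x ^ s + (x ^ s) ^ 2) ≤ 0 := by linarith
    have e2 : s * L * (1 + x ^ s) + 2 * (1 - x ^ s) ≤ 0 := by linarith
    have hQ : s ^ 2 * (3 * (1 - (x ^ s) ^ 2) + s * L * (1 + 4 * x ^ s + (x ^ s) ^ 2))
        + s * (1 - x ^ s) * (s * L * (1 + x ^ s) + 2 * (1 - x ^ s)) ≤ 0 := by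
      have t1 : s ^ 2 * (3 * (1 - (x ^ s) ^ 2) + s * L * (1 + 4 * x ^ s + (x ^ s) ^ 2)) ≤ 0 :=
        mul_nonpos_iff.mpr (Or.inl ⟨sq_nonneg s, e1⟩)
      have t2 : s * (1 - x ^ s) * (s * L * (1 + x ^ s) + 2 * (1 - x ^ s)) ≤ 0 :=
        mul_nonpos_iff.mpr (Or.inl ⟨by nlinarith, e2⟩)
      linarith
    have hnum : ((2 * s * x ^ (s - 1) + s ^ 2 * (x ^ (s - 1) * L)) * (1 + s + (s - 1) * x ^ s)
          + s ^ 2 * x ^ (s - 1) * (1 + (x ^ s + (s - 1) * (x ^ s * L)))) * (1 - x ^ s) ^ 3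
        - s ^ 2 * x ^ (s - 1) * (1 + s + (s - 1) * x ^ s) * (3 * (1 - x ^ s) ^ 2 * (-(x ^ s * L)))
        = x ^ (s - 1) * (1 - x ^ s) ^ 2 *
          (s ^ 2 * (3 * (1 - (x ^ s) ^ 2) + s * L * (1 + 4 * x ^ s + (x ^ s) ^ 2))
            + s * (1 - x ^ s) * (s * L * (1 + x ^ s) + 2 * (1 - x ^ s))) := by
      rw [← hxsmul s]
      ring
    rw [div_nonpos_iff]
    right
    constructor
    · rw [hnum]
      apply mul_nonpos_iff.mpr (Or.inl ⟨by positivity, hQ⟩)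
    · positivity
  have hanti : AntitoneOn Φ (Ici 1) := by
    apply antitoneOn_of_deriv_nonpos (convex_Ici 1)
    · intro s hs
      exact (hasDeriv s (lt_of_lt_of_le zero_lt_one hs)).continuousAt.continuousWithinAt
    · rw [interior_Ici]
      intro s hs
      exact (hasDeriv s (by linarith [mem_Ioi.mp hs])).differentiableAt.differentiableWithinAt
    · rw [interior_Ici]
      intro s hs
      have hs1 : (1:ℝ) < s := mem_Ioi.mp hs
      rw [(hasDeriv s (by linarith)).deriv]
      exact hderiv_nonpos s hs1
  have hfin : Φ v ≤ Φ 1 := hanti self_mem_Ici (mem_Ici.mpr hv) hv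
  have hPhi1 : Φ 1 = 2 / (1 - x) ^ 3 := by
    rw [hPhi]
    norm_num
  rw [hPhi1] at hfin
  exact hfin


theorem stmt17 (v : ℝ) (hv : 1 ≤ v) :
    ConcaveOn ℝ (Set.Ico (0 : ℝ) 1)
      (fun ρ : ℝ => v * ρ / (1 - ρ ^ v) - ρ / (1 - ρ)) := by
  have hv0 : (0:ℝ) < v := lt_of_lt_of_le zero_lt_one hv
  have hne1 : ∀ x : ℝ, 0 ≤ x → x < 1 → (1:ℝ) - x ^ v ≠ 0 := by
    intro x hx0 hx1
    have : x ^ v < 1 := Real.rpow_lt_one hx0 hx1 hv0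
    have : 0 < 1 - x ^ v := by linarith
    exact ne_of_gt this
  refine concaveOn_of_hasDerivWithinAt2_nonpos
    (f' := fun x => (v * (1 - x ^ v) + v * v * x ^ v) / (1 - x ^ v) ^ 2 - 1 / (1 - x) ^ 2)
    (f'' := fun x => v ^ 2 * x ^ (v - 1) * (1 + v + (v - 1) * x ^ v) / (1 - x ^ v) ^ 3
      - 2 / (1 - x) ^ 3)
    (convex_Ico 0 1) ?_ ?_ ?_ ?_
  · -- continuity
    intro x hx
    obtain ⟨hx0, hx1⟩ := hx
    have hrpow : ContinuousAt (fun ρ : ℝ => ρ ^ v) x :=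
      Real.continuousAt_rpow_const x v (Or.inr hv0.le)
    have h1 := hne1 x hx0 hx1
    have h2 : (1:ℝ) - x ≠ 0 := by
      have : 0 < 1 - x := by linarith
      exact ne_of_gt this
    exact (((continuousAt_const.mul continuousAt_id).div
      (continuousAt_const.sub hrpow) h1).sub
      (continuousAt_id.div (continuousAt_const.sub continuousAt_id) h2)).continuousWithinAt
  · -- first derivative
    rw [interior_Ico]
    intro x hx
    obtain ⟨hx0, hx1⟩ := hx
    have h1 := hne1 x hx0.le hx1
    have h2 : (1:ℝ) - x ≠ 0 := by
      have : 0 < 1 - x := by linarith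
      exact ne_of_gt this
    have hxsmul : x ^ (v - 1) * x = x ^ v := by
      rw [← Real.rpow_add_one hx0.ne' (v - 1), sub_add_cancel]
    have hpow : HasDerivAt (fun ρ : ℝ => ρ ^ v) (v * x ^ (v - 1)) x :=
      Real.hasDerivAt_rpow_const (Or.inl hx0.ne')
    have hA := ((hasDerivAt_id x).const_mul v).div (hpow.const_sub 1) h1
    have hB := (hasDerivAt_id x).div ((hasDerivAt_id x).const_sub 1) h2
    have h := hA.sub hB
    refine (HasDerivAt.hasDerivWithinAt ?_)
    convert h using 1
    · rfl
    simp only [id_eq]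
    field_simp
    rw [← hxsmul]
    ring
  · -- second derivative
    rw [interior_Ico]
    intro x hx
    obtain ⟨hx0, hx1⟩ := hx
    have h1 := hne1 x hx0.le hx1
    have h2 : (1:ℝ) - x ≠ 0 := by
      have : 0 < 1 - x := by linarith
      exact ne_of_gt this
    have hxsmul : x ^ (v - 1) * x = x ^ v := by
      rw [← Real.rpow_add_one hx0.ne' (v - 1), sub_add_cancel]
    have hpow : HasDerivAt (fun ρ : ℝ => ρ ^ v) (v * x ^ (v - 1)) x :=
      Real.hasDerivAt_rpow_const (Or.inl hx0.ne')
    have hN := ((hpow.const_sub 1).const_mul v).add (hpow.const_mul (v * v))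
    have hD := (hpow.const_sub 1).pow 2
    have hFrac := hN.div hD (pow_ne_zero 2 h1)
    have hden2 := ((hasDerivAt_id x).const_sub 1).pow 2
    have hFrac2 := (hasDerivAt_const x (1:ℝ)).div hden2 (pow_ne_zero 2 h2)
    have h := hFrac.sub hFrac2
    refine (HasDerivAt.hasDerivWithinAt ?_)
    convert h using 1
    · rfl
    simp only [id_eq, Pi.pow_apply, Pi.add_apply]
    push_cast
    field_simp
    rw [← hxsmul]
    ring
  · -- nonpositivity
    rw [interior_Ico]
    intro x hx
    obtain ⟨hx0, hx1⟩ := hx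
    have h := phi_le hx0 hx1 hv
    linarith
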